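/- Let X be a real Hilbert space, J : X → X* the Riesz duality map (⟨J x, y⟩ = ⟪x, y⟫_X), B : X → X* a continuous linear symmetric monotone operator, and ε > 0. Then the bilinear form (u, v)_* := ⟨(ε J + B)^{-1} u, v⟩ on X* is an inner product (it is bilinear, symmetric, and positive definite), and its induced norm |u|_* = (u, u)_*^{1/2} is equivalent to the dual norm: there exist constants m, M > 0 such that m ‖u‖_{X*} ≤ |u|_* ≤ M ‖u‖_{X*} for all u ∈ X*. -/
import Mathlib
set_option maxHeartbeats 400000


/- STATEMENT 3: With X a real Hilbert space, J the Riesz map, B continuous linear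
symmetric monotone and ε > 0, the bilinear form (u,v)_* = ⟨(εJ+B)⁻¹ u, v⟩ on
X* = `X →L[ℝ] ℝ` is an inner product (bilinear, symmetric, positive definite) and
its induced norm |u|_* = (u,u)_*^{1/2} is equivalent to the dual norm.
The continuous inverse T = (εJ+B)⁻¹ is hypothesized via its defining equations
(its existence is the content of Statement 2); the pairing ⟨x, f⟩ for x ∈ X,
f ∈ X* is f x, so (u,v)_* = v (T u). -/

open RealInnerProductSpace

theorem statement_3
    {X : Type*} [NormedAddCommGroup X] [InnerProductSpace ℝ X] [CompleteSpace X]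
    (B : X →L[ℝ] (X →L[ℝ] ℝ))
    (hsymm : ∀ x y : X, B x y = B y x)
    (hmono : ∀ x : X, 0 ≤ B x x)
    (ε : ℝ) (hε : 0 < ε)
    -- T = (εJ + B)⁻¹ : X* → X, the continuous inverse of εJ + B
    (T : (X →L[ℝ] ℝ) →L[ℝ] X)
    (hT₁ : ∀ x : X, T (ε • (innerSL ℝ x : X →L[ℝ] ℝ) + B x) = x)
    (hT₂ : ∀ f : X →L[ℝ] ℝ, ε • (innerSL ℝ (T f) : X →L[ℝ] ℝ) + B (T f) = f) :
    -- (u,v)_* := v (T u) is symmetric ...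
    (∀ u v : X →L[ℝ] ℝ, v (T u) = u (T v)) ∧
    -- ... bilinear (it is linear in each argument; linearity in the first one
    -- is the nontrivial half, the second being linear by definition) ...
    (∀ (a : ℝ) (u u' v : X →L[ℝ] ℝ),
      v (T (a • u + u')) = a * v (T u) + v (T u')) ∧
    (∀ (a : ℝ) (u v v' : X →L[ℝ] ℝ),
      (a • v + v') (T u) = a * v (T u) + v' (T u)) ∧
    -- ... and positive definite ...
    (∀ u : X →L[ℝ] ℝ, 0 ≤ u (T u)) ∧
    (∀ u : X →L[ℝ] ℝ, u ≠ 0 → 0 < u (T u)) ∧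
    -- ... and the induced norm |u|_* = (u,u)_*^{1/2} is equivalent to ‖·‖_{X*}
    (∃ m M : ℝ, 0 < m ∧ 0 < M ∧ ∀ u : X →L[ℝ] ℝ,
      m * ‖u‖ ≤ Real.sqrt (u (T u)) ∧ Real.sqrt (u (T u)) ≤ M * ‖u‖) := by
  -- expansion of u applied to any y
  have expand : ∀ (u : X →L[ℝ] ℝ) (y : X),
      u y = ε * ⟪T u, y⟫ + B (T u) y := by
    intro u y
    have h := congrArg (fun f : X →L[ℝ] ℝ => f y) (hT₂ u)
    simp only [ContinuousLinearMap.add_apply, ContinuousLinearMap.smul_apply,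
      innerSL_apply_apply, smul_eq_mul] at h
    linarith [h]
  have key : ∀ u : X →L[ℝ] ℝ, u (T u) = ε * ‖T u‖ ^ 2 + B (T u) (T u) := by
    intro u
    rw [expand u (T u), real_inner_self_eq_norm_sq]
  have hsym : ∀ u v : X →L[ℝ] ℝ, v (T u) = u (T v) := by
    intro u v
    rw [expand v (T u), expand u (T v), real_inner_comm, hsymm]
  have hpos : ∀ u : X →L[ℝ] ℝ, 0 ≤ u (T u) := by
    intro u
    rw [key u]
    have := hmono (T u)
    positivity
  have hTle : ∀ u : X →L[ℝ] ℝ, ε * ‖T u‖ ^ 2 ≤ u (T u) := by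
    intro u
    rw [key u]
    linarith [hmono (T u)]
  have hTzero : ∀ u : X →L[ℝ] ℝ, T u = 0 → u = 0 := by
    intro u h0
    have := hT₂ u
    rw [h0] at this
    simpa using this.symm
  refine ⟨hsym, ?_, ?_, hpos, ?_, ?_⟩
  · intro a u u' v
    simp [map_add, map_smul, smul_eq_mul, mul_comm]
  · intro a u v v'
    simp [ContinuousLinearMap.add_apply, ContinuousLinearMap.smul_apply]
  · intro u hu
    have hTu : T u ≠ 0 := fun h => hu (hTzero u h)
    have : 0 < ε * ‖T u‖ ^ 2 := by
      have : 0 < ‖T u‖ := norm_pos_iff.mpr hTu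
      positivity
    linarith [hTle u]
  · -- norm equivalence
    have hBnn : (0:ℝ) ≤ ‖B‖ := B.opNorm_nonneg
    refine ⟨Real.sqrt ε / (ε + ‖B‖), Real.sqrt (‖T‖ + 1), by positivity, by positivity, ?_⟩
    intro u
    constructor
    · -- lower bound
      have hnorm : ‖u‖ ≤ (ε + ‖B‖) * ‖T u‖ := by
        calc ‖u‖ = ‖ε • (innerSL ℝ (T u) : X →L[ℝ] ℝ) + B (T u)‖ := by rw [hT₂ u]
          _ ≤ ‖ε • (innerSL ℝ (T u) : X →L[ℝ] ℝ)‖ + ‖B (T u)‖ := norm_add_le _ _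
          _ ≤ ε * ‖T u‖ + ‖B‖ * ‖T u‖ := by
              gcongr
              · have hsm : ε • (innerSL ℝ (T u) : X →L[ℝ] ℝ) = innerSL ℝ (ε • T u) := by
                  ext y
                  simp [real_inner_smul_left]
                rw [hsm, innerSL_apply_norm, norm_smul, Real.norm_eq_abs, abs_of_pos hε]
              · exact B.le_opNorm _
          _ = (ε + ‖B‖) * ‖T u‖ := by ring
      have h1 : Real.sqrt ε * ‖T u‖ ≤ Real.sqrt (u (T u)) := by
        have : Real.sqrt (ε * ‖T u‖ ^ 2) ≤ Real.sqrt (u (T u)) :=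
          Real.sqrt_le_sqrt (hTle u)
        calc Real.sqrt ε * ‖T u‖ = Real.sqrt ε * Real.sqrt (‖T u‖ ^ 2) := by
              rw [Real.sqrt_sq (norm_nonneg _)]
          _ = Real.sqrt (ε * ‖T u‖ ^ 2) := (Real.sqrt_mul hε.le _).symm
          _ ≤ _ := this
      have h2 : Real.sqrt ε / (ε + ‖B‖) * ‖u‖ ≤ Real.sqrt ε * ‖T u‖ := by
        have h3 := mul_le_mul_of_nonneg_left hnorm (Real.sqrt_nonneg ε)
        rw [div_mul_eq_mul_div, div_le_iff₀ (by positivity)]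
        nlinarith [h3]
      linarith
    · -- upper bound
      have hle : u (T u) ≤ (‖T‖ + 1) * ‖u‖ ^ 2 := by
        calc u (T u) ≤ ‖u (T u)‖ := le_abs_self _
          _ ≤ ‖u‖ * ‖T u‖ := u.le_opNorm _
          _ ≤ ‖u‖ * (‖T‖ * ‖u‖) := by gcongr; exact T.le_opNorm _
          _ ≤ (‖T‖ + 1) * ‖u‖ ^ 2 := by nlinarith [norm_nonneg u, norm_nonneg T]
      calc Real.sqrt (u (T u)) ≤ Real.sqrt ((‖T‖ + 1) * ‖u‖ ^ 2) := Real.sqrt_le_sqrt hle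
        _ = Real.sqrt (‖T‖ + 1) * ‖u‖ := by
            rw [Real.sqrt_mul (by positivity), Real.sqrt_sq (norm_nonneg _)]
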